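/- Let i ∈ {1,2} and let g ∈ GL₃(L) satisfy g⁻¹ · b_i · σ(g) = b_i and v_L(det g) = 0. Then g lies in the standard Iwahori subgroup: the diagonal entries g₁₁, g₂₂, g₃₃ are units of 𝒪, the strictly upper-triangular entries g₁₂, g₁₃, g₂₃ lie in t𝒪, and the strictly lower-triangular entries g₂₁, g₃₁, g₃₂ lie in 𝒪. -/

import Mathlib

noncomputable section

open Matrix HahnSeries

/-- `k̄`: an algebraic closure of the field `𝔽_q` with `q = p ^ n` elements. -/
abbrev Kbar (p n : ℕ) [Fact p.Prime] : Type := AlgebraicClosure (GaloisField p n)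

/-- `L = k̄((t))`, the field of formal Laurent series over `k̄`. -/
abbrev Lser (p n : ℕ) [Fact p.Prime] : Type := LaurentSeries (Kbar p n)

/-- The Frobenius `x ↦ x ^ q` (with `q = p ^ n`) of `k̄` over `k = 𝔽_q`. -/
def frobKbar (p n : ℕ) [Fact p.Prime] : Kbar p n →+* Kbar p n :=
  iterateFrobenius (Kbar p n) p n

/-- `σ : L → L`, applying the Frobenius of `k̄/k` to each coefficient:
`∑ aₘ tᵐ ↦ ∑ aₘ^q tᵐ`. -/
def sigmaL (p n : ℕ) [Fact p.Prime] : Lser p n →+* Lser p n where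
  toFun x := x.map (frobKbar p n)
  map_zero' := HahnSeries.map_zero ((frobKbar p n) : ZeroHom (Kbar p n) (Kbar p n))
  map_one' := HahnSeries.map_one ((frobKbar p n).toMonoidWithZeroHom)
  map_add' x y := HahnSeries.map_add ((frobKbar p n) : (Kbar p n) →+ (Kbar p n))
  map_mul' x y := HahnSeries.map_mul ((frobKbar p n) : (Kbar p n) →ₙ+* (Kbar p n))

/-- `σ` extended entrywise to `GL₃(L)`. -/
def sigmaGL (p n : ℕ) [Fact p.Prime] :
    GL (Fin 3) (Lser p n) →* GL (Fin 3) (Lser p n) :=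
  Units.map ((sigmaL p n).mapMatrix.toMonoidHom)

/-- The element `t ∈ L`, as a unit of `L`. -/
def tUnit (p n : ℕ) [Fact p.Prime] : (Lser p n)ˣ :=
  Units.mk0 (HahnSeries.single (1 : ℤ) (1 : Kbar p n))
    (HahnSeries.single_ne_zero one_ne_zero)

/-- The valuation ring `𝒪 = k̄[[t]] ⊆ L`. -/
def Oring (p n : ℕ) [Fact p.Prime] : Subring (Lser p n) :=
  (HahnSeries.ofPowerSeries ℤ (Kbar p n)).range

/-- `K = GL₃(𝒪)`: the invertible matrices with entries in `𝒪` whose inverse also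
has entries in `𝒪`. -/
def Kgp (p n : ℕ) [Fact p.Prime] : Set (GL (Fin 3) (Lser p n)) :=
  {g | (∀ i j, (g : Matrix (Fin 3) (Fin 3) (Lser p n)) i j ∈ Oring p n) ∧
       (∀ i j, ((g⁻¹ : GL (Fin 3) (Lser p n)) : Matrix (Fin 3) (Fin 3) (Lser p n)) i j
          ∈ Oring p n)}

/-- `t^λ = diag(t^{m₁}, t^{m₂}, t^{m₃}) ∈ GL₃(L)` for `λ = (m₁, m₂, m₃) ∈ ℤ³`. -/
def tLam (p n : ℕ) [Fact p.Prime] (m : Fin 3 → ℤ) : GL (Fin 3) (Lser p n) where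
  val := Matrix.diagonal fun i => ((tUnit p n ^ m i : (Lser p n)ˣ) : Lser p n)
  inv := Matrix.diagonal fun i => ((tUnit p n ^ (-(m i)) : (Lser p n)ˣ) : Lser p n)
  val_inv := by
    rw [Matrix.diagonal_mul_diagonal]
    convert Matrix.diagonal_one using 2
    funext i
    rw [← Units.val_mul, ← _root_.zpow_add, add_neg_cancel, zpow_zero, Units.val_one]
  inv_val := by
    rw [Matrix.diagonal_mul_diagonal]
    convert Matrix.diagonal_one using 2
    funext i
    rw [← Units.val_mul, ← _root_.zpow_add, neg_add_cancel, zpow_zero, Units.val_one]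

/-- The valuation `v_L : L → ℤ` (the `t`-adic order). -/
def vL (p n : ℕ) [Fact p.Prime] (x : Lser p n) : ℤ := x.order

/-- `η = v_L ∘ det : GL₃(L) → ℤ`. -/
def eta (p n : ℕ) [Fact p.Prime] (g : GL (Fin 3) (Lser p n)) : ℤ :=
  vL p n ((g : Matrix (Fin 3) (Fin 3) (Lser p n)).det)

/-- Membership in the double coset `K t^λ K ⊆ GL₃(L)`. -/
def inKtK (p n : ℕ) [Fact p.Prime] (m : Fin 3 → ℤ) (g : GL (Fin 3) (Lser p n)) : Prop :=
  ∃ k₁ ∈ Kgp p n, ∃ k₂ ∈ Kgp p n, g = k₁ * tLam p n m * k₂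
/-- `b₁`, the superbasic element with Newton vector `(1/3, 1/3, 1/3)`. -/
def bOne (p n : ℕ) [Fact p.Prime] : GL (Fin 3) (Lser p n) :=
  Matrix.GeneralLinearGroup.mkOfDetNeZero
    !![0, 0, ((tUnit p n : (Lser p n)ˣ) : Lser p n); 1, 0, 0; 0, 1, 0]
    (by
      have ht : ((tUnit p n : (Lser p n)ˣ) : Lser p n) ≠ 0 := (tUnit p n).ne_zero
      simp [Matrix.det_fin_three, ht])

/-- `b₂`, the superbasic element with Newton vector `(2/3, 2/3, 2/3)`. -/
def bTwo (p n : ℕ) [Fact p.Prime] : GL (Fin 3) (Lser p n) :=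
  Matrix.GeneralLinearGroup.mkOfDetNeZero
    !![0, ((tUnit p n : (Lser p n)ˣ) : Lser p n), 0;
       0, 0, ((tUnit p n : (Lser p n)ˣ) : Lser p n); 1, 0, 0]
    (by
      have ht : ((tUnit p n : (Lser p n)ˣ) : Lser p n) ≠ 0 := (tUnit p n).ne_zero
      simp [Matrix.det_fin_three, ht])


/-! ### Auxiliary lemmas -/

section WithTopLemmas

lemma wt_min_lt_mixed (x y z m : WithTop ℤ) (h1 : x < y) (h2 : x < z)
    (hs : x + y + z = m + m + m) : x < m := by
  rcases eq_or_ne m ⊤ with rfl | hm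
  · exact h1.trans_le le_top
  · lift m to ℤ using hm
    lift x to ℤ using h1.ne_top
    have hxyz : (x:WithTop ℤ) + y + z ≠ ⊤ := by rw [hs]; simp [WithTop.add_eq_top]
    have hy : y ≠ ⊤ := fun h => hxyz (by simp [h, WithTop.add_eq_top])
    have hz : z ≠ ⊤ := fun h => hxyz (by simp [h, WithTop.add_eq_top])
    lift y to ℤ using hy; lift z to ℤ using hz
    norm_cast at *; omega

lemma wt_AB (D P : WithTop ℤ) (hD : D ≠ ⊤) : D+D+D ≠ (P+1)+(P+1)+P := by
  induction D using WithTop.recTopCoe with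
  | top => simp at hD
  | coe d =>
    induction P using WithTop.recTopCoe with
    | top => simp
    | coe p => intro h; norm_cast at h; omega

lemma wt_AC (D Q : WithTop ℤ) (hD : D ≠ ⊤) : D+D+D ≠ (Q+1)+Q+Q := by
  induction D using WithTop.recTopCoe with
  | top => simp at hD
  | coe d =>
    induction Q using WithTop.recTopCoe with
    | top => simp
    | coe p => intro h; norm_cast at h; omega

lemma wt_BC (P Q : WithTop ℤ) (hP : P ≠ ⊤) : (P+1)+(P+1)+P ≠ (Q+1)+Q+Q := by
  induction P using WithTop.recTopCoe with
  | top => simp at hP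
  | coe d =>
    induction Q using WithTop.recTopCoe with
    | top => simp
    | coe p => intro h; norm_cast at h; omega

lemma wt_A0 (D : WithTop ℤ) (h : D + D + D = 0) : D = 0 := by
  induction D using WithTop.recTopCoe with
  | top => simp at h
  | coe d => norm_cast at *; omega

lemma wt_B0 (P : WithTop ℤ) (h : (P+1)+(P+1)+P = 0) : False := by
  induction P using WithTop.recTopCoe with
  | top => simp at h
  | coe p => norm_cast at h; omega

lemma wt_C0 (Q : WithTop ℤ) (h : (Q+1)+Q+Q = 0) : False := by
  induction Q using WithTop.recTopCoe with
  | top => simp at h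
  | coe p => norm_cast at h; omega

lemma wt_Bge (P : WithTop ℤ) (h : (0:WithTop ℤ) ≤ (P+1)+(P+1)+P) : 0 ≤ P := by
  induction P using WithTop.recTopCoe with
  | top => exact le_top
  | coe p => norm_cast at *; omega

lemma wt_Cge (Q : WithTop ℤ) (h : (0:WithTop ℤ) ≤ (Q+1)+Q+Q) : 0 ≤ Q := by
  induction Q using WithTop.recTopCoe with
  | top => exact le_top
  | coe p => norm_cast at *; omega

lemma wt_top3 (D : WithTop ℤ) (h : D + D + D = ⊤) : D = ⊤ := by
  simpa [WithTop.add_eq_top] using h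

lemma wt_topP (P : WithTop ℤ) (h : (P+1)+(P+1)+P = ⊤) : P = ⊤ := by
  simp [WithTop.add_eq_top] at h; tauto

lemma wt_topQ (Q : WithTop ℤ) (h : (Q+1)+Q+Q = ⊤) : Q = ⊤ := by
  simp [WithTop.add_eq_top] at h; tauto

lemma wt_negone (V P : WithTop ℤ) (hV : V = 1 + P) (hP : 0 ≤ P) :
    0 ≤ -(1:WithTop ℤ) + V := by
  subst hV
  induction P using WithTop.recTopCoe with
  | top => simp
  | coe p =>
    have h1 : -(1:WithTop ℤ) = ((-1 : ℤ) : WithTop ℤ) := rfl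
    have h2 : (1 : WithTop ℤ) = ((1 : ℤ) : WithTop ℤ) := rfl
    have hp' : (0:ℤ) ≤ p := by exact_mod_cast hP
    rw [h1, h2]
    exact_mod_cast (by omega : (0:ℤ) ≤ -1 + (1 + p))

end WithTopLemmas

/-- The key abstract valuation computation: if the valuations of the entries of a matrix
satisfy the relations coming from `σ`-conjugation-invariance under `b₁` or `b₂`, and the
determinant has valuation `0`, then the diagonal valuation is `0` and the lower-triangular
valuations are nonnegative. -/
lemma keyVal {F : Type*} [Field F] (v : AddValuation F (WithTop ℤ))
    (a b c u1 u2 l1 w m1 m2 : F)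
    (hab : v a = v b) (hbc : v b = v c)
    (hu : v u1 = v u2) (hul : v u1 = 1 + v l1)
    (hwm : v w = 1 + v m1) (hmm : v m1 = v m2)
    (hdet : v (a*b*c - a*u2*m2 - u1*m1*c + u1*u2*l1 + w*m1*m2 - w*b*l1) = 0) :
    v a = 0 ∧ 0 ≤ v l1 ∧ 0 ≤ v m1 := by
  set D := v a with hD
  set P := v l1 with hP
  set Q := v m1 with hQ
  have vac : v c = D := (hab.trans hbc).symm
  have vab : v b = D := hab.symm
  have vu1 : v u1 = P + 1 := by rw [hul, add_comm]
  have vu2 : v u2 = P + 1 := by rw [← hu, vu1]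
  have vw : v w = Q + 1 := by rw [hwm, add_comm]
  have vm2 : v m2 = Q := hmm.symm
  have vT1 : v (a*b*c) = D + D + D := by rw [v.map_mul, v.map_mul, vab, vac]
  have vT2 : v (a*u2*m2) = D + (P+1) + Q := by rw [v.map_mul, v.map_mul, vu2, vm2]
  have vT3 : v (u1*m1*c) = D + (P+1) + Q := by
    rw [v.map_mul, v.map_mul, vu1, vac, ← hQ]; abel
  have vT4 : v (u1*u2*l1) = (P+1)+(P+1)+P := by rw [v.map_mul, v.map_mul, vu1, vu2]
  have vT5 : v (w*m1*m2) = (Q+1)+Q+Q := by rw [v.map_mul, v.map_mul, vw, vm2]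
  have vT6 : v (w*b*l1) = D + (P+1) + Q := by rw [v.map_mul, v.map_mul, vw, vab]; abel
  set A := D + D + D with hA
  set B := (P+1)+(P+1)+P with hB
  set C := (Q+1)+Q+Q with hC
  set M := D + (P+1) + Q with hM
  have hsum : A + B + C = M + M + M := by rw [hA, hB, hC, hM]; abel
  have hntop : ¬ (A = ⊤ ∧ B = ⊤ ∧ C = ⊤) := by
    rintro ⟨hA', hB', hC'⟩
    have hD' := wt_top3 D hA'
    have hP' := wt_topP P hB'
    have hQ' := wt_topQ Q hC'
    have za : a = 0 := v.top_iff.mp (by rw [← hD, hD'])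
    have zb : b = 0 := v.top_iff.mp (by rw [vab, hD'])
    have zc : c = 0 := v.top_iff.mp (by rw [vac, hD'])
    have zu1 : u1 = 0 := v.top_iff.mp (by rw [vu1, hP']; rfl)
    have zw : w = 0 := v.top_iff.mp (by rw [vw, hQ']; rfl)
    rw [za, zb, zc, zu1, zw] at hdet
    simp at hdet
  have hCcase : C < A → C < B → False := by
    intro hCA hCB
    have hCM : C < M := wt_min_lt_mixed C A B M hCA hCB (by rw [← hsum]; abel)
    have g1 : C < v (a*b*c - a*u2*m2) :=
      lt_of_lt_of_le (by rw [vT1, vT2]; exact lt_min hCA hCM) (v.map_sub _ _)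
    have g2 : C < v (a*b*c - a*u2*m2 - u1*m1*c) :=
      lt_of_lt_of_le (by rw [vT3]; exact lt_min g1 hCM) (v.map_sub _ _)
    have g3 : C < v (a*b*c - a*u2*m2 - u1*m1*c + u1*u2*l1) := by
      refine v.map_lt_add ?_ (by rw [vT4]; exact hCB)
      exact g2
    have g4 : v (a*b*c - a*u2*m2 - u1*m1*c + u1*u2*l1 + w*m1*m2) = C := by
      rw [v.map_add_eq_of_lt_right (by rw [vT5]; exact g3), vT5]
    have g5 : v (a*b*c - a*u2*m2 - u1*m1*c + u1*u2*l1 + w*m1*m2 - w*b*l1) = C := by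
      rw [v.map_sub_eq_of_lt_left (by rw [g4, vT6]; exact hCM), g4]
    exact wt_C0 Q (g5.symm.trans hdet)
  rcases le_or_gt A B with hAB | hAB
  · rcases le_or_gt A C with hAC | hAC
    · have hAt : A ≠ ⊤ := fun h =>
        hntop ⟨h, top_unique (h ▸ hAB), top_unique (h ▸ hAC)⟩
      have hDt : D ≠ ⊤ := fun h => hAt (by rw [hA, h]; simp)
      have hAB' : A < B := hAB.lt_of_ne (wt_AB D P hDt)
      have hAC' : A < C := hAC.lt_of_ne (wt_AC D Q hDt)
      have hAM : A < M := wt_min_lt_mixed A B C M hAB' hAC' hsum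
      have e1 : v (a*b*c - a*u2*m2) = A := by
        rw [v.map_sub_eq_of_lt_left (by rw [vT1, vT2]; exact hAM), vT1]
      have e2 : v (a*b*c - a*u2*m2 - u1*m1*c) = A := by
        rw [v.map_sub_eq_of_lt_left (by rw [e1, vT3]; exact hAM), e1]
      have e3 : v (a*b*c - a*u2*m2 - u1*m1*c + u1*u2*l1) = A := by
        rw [v.map_add_eq_of_lt_left (by rw [e2, vT4]; exact hAB'), e2]
      have e4 : v (a*b*c - a*u2*m2 - u1*m1*c + u1*u2*l1 + w*m1*m2) = A := by
        rw [v.map_add_eq_of_lt_left (by rw [e3, vT5]; exact hAC'), e3]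
      have e5 : v (a*b*c - a*u2*m2 - u1*m1*c + u1*u2*l1 + w*m1*m2 - w*b*l1) = A := by
        rw [v.map_sub_eq_of_lt_left (by rw [e4, vT6]; exact hAM), e4]
      have hA0 : A = 0 := e5.symm.trans hdet
      refine ⟨wt_A0 D (hA ▸ hA0), ?_, ?_⟩
      · exact wt_Bge P (hB ▸ (hA0 ▸ hAB))
      · exact wt_Cge Q (hC ▸ (hA0 ▸ hAC))
    · exact absurd (hCcase hAC (hAC.trans_le hAB)) (by simp)
  · rcases le_or_gt B C with hBC | hBC
    · have hBt : B ≠ ⊤ := hAB.ne_top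
      have hPt : P ≠ ⊤ := fun h => hBt (by rw [hB, h]; simp)
      have hBC' : B < C := hBC.lt_of_ne (wt_BC P Q hPt)
      have hBM : B < M := wt_min_lt_mixed B A C M hAB hBC' (by rw [← hsum]; abel)
      have f1 : B < v (a*b*c - a*u2*m2) :=
        lt_of_lt_of_le (by rw [vT1, vT2]; exact lt_min hAB hBM) (v.map_sub _ _)
      have f2 : B < v (a*b*c - a*u2*m2 - u1*m1*c) :=
        lt_of_lt_of_le (by rw [vT3]; exact lt_min f1 hBM) (v.map_sub _ _)
      have f3 : v (a*b*c - a*u2*m2 - u1*m1*c + u1*u2*l1) = B := by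
        rw [v.map_add_eq_of_lt_right (by rw [vT4]; exact f2), vT4]
      have f4 : v (a*b*c - a*u2*m2 - u1*m1*c + u1*u2*l1 + w*m1*m2) = B := by
        rw [v.map_add_eq_of_lt_left (by rw [f3, vT5]; exact hBC'), f3]
      have f5 : v (a*b*c - a*u2*m2 - u1*m1*c + u1*u2*l1 + w*m1*m2 - w*b*l1) = B := by
        rw [v.map_sub_eq_of_lt_left (by rw [f4, vT6]; exact hBM), f4]
      exact absurd (wt_B0 P (f5.symm.trans hdet)) (by simp)
    · exact absurd (hCcase (hBC.trans hAB) hBC) (by simp)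

section ValLemmas
variable (p n : ℕ) [Fact p.Prime]

/-- The additive valuation on `L`. -/
abbrev valL : AddValuation (Lser p n) (WithTop ℤ) := HahnSeries.addVal ℤ (Kbar p n)

lemma val_sigma (x : Lser p n) : valL p n (sigmaL p n x) = valL p n x := by
  by_cases hx : x = 0
  · rw [hx, map_zero]
  · have hinj : Function.Injective (frobKbar p n) := (frobKbar p n).injective
    have hcoeff : ∀ g : ℤ, (sigmaL p n x).coeff g = frobKbar p n (x.coeff g) := fun g => rfl
    have hσ : sigmaL p n x ≠ 0 := by
      intro h
      apply (HahnSeries.coeff_order_eq_zero.not.mpr hx)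
      have := congrArg (fun y : Lser p n => y.coeff x.order) h
      simp only [hcoeff, HahnSeries.coeff_zero] at this
      exact hinj (by rw [this, map_zero])
    rw [HahnSeries.addVal_apply_of_ne hx, HahnSeries.addVal_apply_of_ne hσ]
    norm_cast
    apply le_antisymm
    · apply HahnSeries.order_le_of_coeff_ne_zero
      rw [hcoeff]
      exact fun h => (HahnSeries.coeff_order_eq_zero.not.mpr hx) (hinj (by rw [h, map_zero]))
    · apply HahnSeries.order_le_of_coeff_ne_zero
      intro h
      apply (HahnSeries.coeff_order_eq_zero.not.mpr hσ)
      rw [hcoeff, h, map_zero]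

lemma tval_eq : ((tUnit p n : (Lser p n)ˣ) : Lser p n) = HahnSeries.single (1:ℤ) 1 := rfl

lemma val_t : valL p n ((tUnit p n : (Lser p n)ˣ) : Lser p n) = 1 := by
  rw [tval_eq, HahnSeries.addVal_apply_of_ne (HahnSeries.single_ne_zero one_ne_zero),
    HahnSeries.order_single one_ne_zero]
  rfl

lemma mem_Oring_iff (x : Lser p n) : x ∈ Oring p n ↔ 0 ≤ valL p n x := by
  constructor
  · rintro ⟨f, rfl⟩
    by_cases hf : HahnSeries.ofPowerSeries ℤ (Kbar p n) f = 0
    · rw [hf, (valL p n).map_zero]; exact le_top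
    · rw [HahnSeries.addVal_apply_of_ne hf]
      by_contra hneg
      push_neg at hneg
      have hord : (HahnSeries.ofPowerSeries ℤ (Kbar p n) f).order < 0 := by
        exact_mod_cast hneg
      apply (HahnSeries.coeff_order_eq_zero.not.mpr hf)
      rw [show (HahnSeries.ofPowerSeries ℤ (Kbar p n) f) = ((f : PowerSeries (Kbar p n)) :
        LaurentSeries (Kbar p n)) from rfl, PowerSeries.coeff_coe, if_pos hord]
  · intro h
    by_cases hx : x = 0
    · exact ⟨0, by simp [hx]⟩
    · have ho : (0:ℤ) ≤ x.order := by
        rw [HahnSeries.addVal_apply_of_ne hx] at h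
        exact_mod_cast h
      refine ⟨PowerSeries.X ^ x.order.toNat * x.powerSeriesPart, ?_⟩
      exact LaurentSeries.X_order_mul_powerSeriesPart (Int.toNat_of_nonneg ho)

lemma unit_of_val_zero (x : Lser p n) (hx : x ≠ 0) (h : valL p n x = 0) :
    ∃ u : (Oring p n)ˣ, (((u : (Oring p n)ˣ) : Oring p n) : Lser p n) = x := by
  have h1 : x ∈ Oring p n := (mem_Oring_iff p n x).mpr h.ge
  have h2 : x⁻¹ ∈ Oring p n := by
    rw [mem_Oring_iff, (valL p n).map_inv, h]
    simp
  refine ⟨⟨⟨x, h1⟩, ⟨x⁻¹, h2⟩, ?_, ?_⟩, rfl⟩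
  · exact Subtype.ext (mul_inv_cancel₀ hx)
  · exact Subtype.ext (inv_mul_cancel₀ hx)

end ValLemmas

/-- If `g⁻¹ bᵢ σ(g) = bᵢ` (`i = 1, 2`) and `v_L(det g) = 0`, then `g`
lies in the standard Iwahori subgroup: the diagonal entries are units of `𝒪`, the
strictly upper-triangular entries lie in `t𝒪`, and the strictly lower-triangular
entries lie in `𝒪`. -/
theorem statement8 (p n : ℕ) [Fact p.Prime] (hn : 0 < n)
    (b : GL (Fin 3) (Lser p n)) (hb : b = bOne p n ∨ b = bTwo p n)
    (g : GL (Fin 3) (Lser p n))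
    (hg : g⁻¹ * b * sigmaGL p n g = b)
    (hdet : eta p n g = 0) :
    (∀ i : Fin 3, ∃ u : (Oring p n)ˣ,
        (((u : (Oring p n)ˣ) : Oring p n) : Lser p n)
          = (g : Matrix (Fin 3) (Fin 3) (Lser p n)) i i) ∧
    (∀ i j : Fin 3, i < j →
        ∃ y ∈ Oring p n,
          (g : Matrix (Fin 3) (Fin 3) (Lser p n)) i j
            = ((tUnit p n : (Lser p n)ˣ) : Lser p n) * y) ∧
    (∀ i j : Fin 3, j < i →
        (g : Matrix (Fin 3) (Fin 3) (Lser p n)) i j ∈ Oring p n) := by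
    classical
  set t0 := ((tUnit p n : (Lser p n)ˣ) : Lser p n) with ht0def
  have ht0ne : t0 ≠ 0 := (tUnit p n).ne_zero
  simp only [eta, vL] at hdet
  set Mg := (g : Matrix (Fin 3) (Fin 3) (Lser p n)) with hMgdef
  have hmul : b * sigmaGL p n g = g * b := by
    have h1 := congrArg (fun x => g * x) hg
    simp only [← mul_assoc, mul_inv_cancel, one_mul] at h1
    exact h1
  have hM : (b : Matrix (Fin 3) (Fin 3) (Lser p n)) *
      ((sigmaGL p n g : GL (Fin 3) (Lser p n)) : Matrix (Fin 3) (Fin 3) (Lser p n))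
      = Mg * (b : Matrix (Fin 3) (Fin 3) (Lser p n)) := by
    have h2 := congrArg Units.val hmul
    rw [Units.val_mul, Units.val_mul] at h2
    exact h2
  have hσ : ∀ i j, ((sigmaGL p n g : GL (Fin 3) (Lser p n)) :
      Matrix (Fin 3) (Fin 3) (Lser p n)) i j = sigmaL p n (Mg i j) := fun i j => rfl
  have rel : valL p n (Mg 0 0) = valL p n (Mg 1 1) ∧ valL p n (Mg 1 1) = valL p n (Mg 2 2) ∧
      valL p n (Mg 0 1) = valL p n (Mg 1 2) ∧ valL p n (Mg 0 1) = 1 + valL p n (Mg 2 0) ∧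
      valL p n (Mg 0 2) = 1 + valL p n (Mg 1 0) ∧ valL p n (Mg 1 0) = valL p n (Mg 2 1) := by
    rcases hb with rfl | rfl
    · have hb' : ((bOne p n : GL (Fin 3) (Lser p n)) : Matrix (Fin 3) (Fin 3) (Lser p n))
          = !![0, 0, t0; 1, 0, 0; 0, 1, 0] := rfl
      rw [hb'] at hM
      have e00 := congrFun (congrFun hM 0) 0
      have e11 := congrFun (congrFun hM 1) 1
      have e10 := congrFun (congrFun hM 1) 0
      have e12 := congrFun (congrFun hM 1) 2
      have e20 := congrFun (congrFun hM 2) 0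
      have e21 := congrFun (congrFun hM 2) 1
      simp [Matrix.mul_apply, Fin.sum_univ_three, hσ, Matrix.vecHead, Matrix.vecTail]
        at e00 e11 e10 e12 e20 e21
      refine ⟨?_, ?_, ?_, ?_, ?_, ?_⟩
      · rw [← e10, val_sigma]
      · rw [← e21, val_sigma]
      · rw [← e11, val_sigma]
      · rw [← e00, (valL p n).map_mul, val_t, val_sigma]
      · rw [← val_sigma p n (Mg 0 2), e12, (valL p n).map_mul, val_t]
        exact add_comm _ _
      · rw [← e20, val_sigma]
    · have hb' : ((bTwo p n : GL (Fin 3) (Lser p n)) : Matrix (Fin 3) (Fin 3) (Lser p n))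
          = !![0, t0, 0; 0, 0, t0; 1, 0, 0] := rfl
      rw [hb'] at hM
      have f00 := congrFun (congrFun hM 0) 0
      have f01 := congrFun (congrFun hM 0) 1
      have f02 := congrFun (congrFun hM 0) 2
      have f10 := congrFun (congrFun hM 1) 0
      have f11 := congrFun (congrFun hM 1) 1
      have f12 := congrFun (congrFun hM 1) 2
      simp [Matrix.mul_apply, Fin.sum_univ_three, hσ, Matrix.vecHead, Matrix.vecTail]
        at f00 f01 f02 f10 f11 f12
      have c01 : sigmaL p n (Mg 1 1) = Mg 0 0 :=
        mul_left_cancel₀ ht0ne (f01.trans (mul_comm _ _))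
      have c12 : sigmaL p n (Mg 2 2) = Mg 1 1 :=
        mul_left_cancel₀ ht0ne (f12.trans (mul_comm _ _))
      have c02 : sigmaL p n (Mg 1 2) = Mg 0 1 :=
        mul_left_cancel₀ ht0ne (f02.trans (mul_comm _ _))
      have c11 : sigmaL p n (Mg 2 1) = Mg 1 0 :=
        mul_left_cancel₀ ht0ne (f11.trans (mul_comm _ _))
      have r3 : valL p n (Mg 0 1) = valL p n (Mg 1 2) := by rw [← c02, val_sigma]
      have r4' : valL p n (Mg 1 2) = 1 + valL p n (Mg 2 0) := by
        rw [← f10, (valL p n).map_mul, val_t, val_sigma]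
      refine ⟨?_, ?_, r3, r3.trans r4', ?_, ?_⟩
      · rw [← c01, val_sigma]
      · rw [← c12, val_sigma]
      · rw [← f00, (valL p n).map_mul, val_t, val_sigma]
      · rw [← c11, val_sigma]
  obtain ⟨R1, R2, R3, R4, R5, R6⟩ := rel
  have hdetne : Mg.det ≠ 0 := ((Matrix.isUnit_iff_isUnit_det Mg).mp g.isUnit).ne_zero
  have hdv : valL p n Mg.det = 0 := by
    rw [HahnSeries.addVal_apply_of_ne hdetne]
    exact_mod_cast hdet
  rw [Matrix.det_fin_three] at hdv
  obtain ⟨hD0, hPge, hQge⟩ := keyVal (valL p n) (Mg 0 0) (Mg 1 1) (Mg 2 2) (Mg 0 1) (Mg 1 2)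
    (Mg 2 0) (Mg 0 2) (Mg 1 0) (Mg 2 1) R1 R2 R3 R4 R5 R6 hdv
  have h11 : valL p n (Mg 1 1) = 0 := by rw [← R1]; exact hD0
  have h22 : valL p n (Mg 2 2) = 0 := by rw [← R2]; exact h11
  have hQ21 : (0:WithTop ℤ) ≤ valL p n (Mg 2 1) := by rw [← R6]; exact hQge
  have mkup : ∀ x : Lser p n, (∃ Pv, valL p n x = 1 + Pv ∧ 0 ≤ Pv) →
      ∃ y ∈ Oring p n, x = t0 * y := by
    intro x hx
    obtain ⟨Pv, hVx, hPv⟩ := hx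
    refine ⟨t0⁻¹ * x, ?_, by rw [← mul_assoc, mul_inv_cancel₀ ht0ne, one_mul]⟩
    rw [mem_Oring_iff, (valL p n).map_mul, (valL p n).map_inv, val_t]
    exact wt_negone _ Pv hVx hPv
  have ne00 : Mg 0 0 ≠ 0 := (valL p n).ne_top_iff.mp (by rw [hD0]; simp)
  have ne11 : Mg 1 1 ≠ 0 := (valL p n).ne_top_iff.mp (by rw [h11]; simp)
  have ne22 : Mg 2 2 ≠ 0 := (valL p n).ne_top_iff.mp (by rw [h22]; simp)
  refine ⟨?_, ?_, ?_⟩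
  · intro i
    fin_cases i
    · exact unit_of_val_zero p n _ ne00 hD0
    · exact unit_of_val_zero p n _ ne11 h11
    · exact unit_of_val_zero p n _ ne22 h22
  · intro i j hij
    fin_cases i <;> fin_cases j <;> first
      | exact absurd hij (by decide)
      | exact mkup _ ⟨_, R4, hPge⟩
      | exact mkup _ ⟨_, R5, hQge⟩
      | exact mkup _ ⟨_, R3.symm.trans R4, hPge⟩
  · intro i j hij
    fin_cases i <;> fin_cases j <;> first
      | exact absurd hij (by decide)
      | exact (mem_Oring_iff p n _).mpr hQge
      | exact (mem_Oring_iff p n _).mpr hPge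
      | exact (mem_Oring_iff p n _).mpr hQ21
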